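/- The denominator of the optimal strategy is strictly positive: D := kρT cosh(kT/2)(k²η − γρ) + sinh(kT/2)(γρ(2ρ − k²T) + k⁴ηT) > 0, so the formula for ξ* is well defined. -/

import Mathlib

/-- The denominator `D` of the optimal strategy is strictly positive, so the formula
for `ξ*` is well defined. -/
theorem stmt_1 (T x η γ ρ : ℝ) (hT : 0 < T) (hx : 0 < x) (hη : 0 < η) (hγ : 0 < γ)
    (hρ : 0 < ρ) (k : ℝ) (hk : k = Real.sqrt (ρ * (ρ + γ / η))) :
    0 < k * ρ * T * Real.cosh (k * T / 2) * (k ^ 2 * η - γ * ρ) +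
      Real.sinh (k * T / 2) * (γ * ρ * (2 * ρ - k ^ 2 * T) + k ^ 4 * η * T) := by
  have hη0 : η ≠ 0 := ne_of_gt hη
  have hkpos : 0 < k := by
    rw [hk]; exact Real.sqrt_pos.mpr (by positivity)
  have hk2 : k ^ 2 = ρ ^ 2 + γ * ρ / η := by
    rw [hk, Real.sq_sqrt (by positivity)]; field_simp
  have h1 : k ^ 2 * η - γ * ρ = ρ ^ 2 * η := by
    rw [hk2]; field_simp; ring
  have h2 : γ * ρ * (2 * ρ - k ^ 2 * T) + k ^ 4 * η * T
      = 2 * γ * ρ ^ 2 + k ^ 2 * T * ρ ^ 2 * η := by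
    rw [show k ^ 4 = k ^ 2 * k ^ 2 from by ring, hk2]; field_simp; ring
  rw [h1, h2]
  have hcosh : 0 < Real.cosh (k * T / 2) := Real.cosh_pos _
  have hsinh : 0 < Real.sinh (k * T / 2) := by rw [Real.sinh_pos_iff]; positivity
  positivity
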